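/- The endomorphisms A and −A of ⋀^n(ℂ^{2n}) are not conjugate in GL(⋀^n(ℂ^{2n})): there is no invertible linear endomorphism P of ⋀^n(ℂ^{2n}) with P ∘ A ∘ P⁻¹ = −A. -/
import Mathlib


open Matrix

/-- The set of `n`-element subsets of `{1, …, 2n}` (realized as `Fin (2*n)`), indexing the
standard basis `e_I = e_{i₁} ∧ ⋯ ∧ e_{iₙ}` of the `n`-th exterior power `⋀ⁿ(ℂ^{2n})`. -/
abbrev Idx (n : ℕ) := {I : Finset (Fin (2 * n)) // I.card = n}

/-- The matrix of the induced linear map `⋀ⁿ(g)` on `⋀ⁿ(ℂ^{2n})` in the standard basis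
`{e_I}`: its `(I, J)` entry is the `n × n` minor of `g` with rows `I` and columns `J`
(both taken in increasing order), i.e. the coefficient of `e_I` in `⋀ⁿ(g)(e_J)`. -/
noncomputable def wedgePow (n : ℕ) (g : Matrix (Fin (2 * n)) (Fin (2 * n)) ℂ) :
    Matrix (Idx n) (Idx n) ℂ := fun I J =>
  Matrix.det (Matrix.of fun a b : Fin n =>
    g ((I.1.orderIsoOfFin I.2 a).1) ((J.1.orderIsoOfFin J.2 b).1))

/-- `qCoeff n I J = q(e_I, e_J)`, the coefficient of `e_1 ∧ ⋯ ∧ e_{2n}` in `e_I ∧ e_J`: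
it is `0` unless `J = Iᶜ`, in which case it is the sign `(-1)^{#{(i,j) ∈ I × J : i > j}}`
obtained by sorting the concatenation of the increasing enumerations of `I` and `J`. -/
noncomputable def qCoeff (n : ℕ) (I J : Idx n) : ℂ :=
  if (J : Finset (Fin (2 * n))) = (I : Finset (Fin (2 * n)))ᶜ then
    (-1 : ℂ) ^ (((I.1 ×ˢ J.1).filter fun p => p.2 < p.1).card)
  else 0

/-- The bilinear form `q` on `⋀ⁿ(ℂ^{2n})` defined by `v ∧ w = q(v, w) • e_1 ∧ ⋯ ∧ e_{2n}`,
written in coordinates with respect to the basis `{e_I}` (a vector of `⋀ⁿ(ℂ^{2n})` is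
recorded by its coordinate function `Idx n → ℂ`). -/
noncomputable def q (n : ℕ) (v w : Idx n → ℂ) : ℂ :=
  ∑ I : Idx n, ∑ J : Idx n, v I * w J * qCoeff n I J

/-- The basis vector `e_I` of `⋀ⁿ(ℂ^{2n})`, in coordinates. -/
noncomputable def eVec (n : ℕ) (I : Idx n) : Idx n → ℂ :=
  fun J => if J = I then 1 else 0

/-- The complement `Iᶜ` of an `n`-element subset of `{1, …, 2n}`. -/
def complIdx (n : ℕ) (I : Idx n) : Idx n :=
  ⟨(I : Finset (Fin (2 * n)))ᶜ, by
    rw [Finset.card_compl, I.2, Fintype.card_fin]; omega⟩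

/-- The matrix (in the basis `{e_I}`) of the linear map `S` on `⋀ⁿ(ℂ^{2n})` defined by
`S(e_I) = q(e_{Iᶜ}, e_I) • e_{Iᶜ}`. -/
noncomputable def Smat (n : ℕ) : Matrix (Idx n) (Idx n) ℂ := fun I J =>
  if I = complIdx n J then qCoeff n (complIdx n J) J else 0

/-- The `n × n` matrix `w_n` with entries `1` at positions `(i, n+1-i)` and `0` elsewhere. -/
noncomputable def wnMat (n : ℕ) : Matrix (Fin n) (Fin n) ℂ := fun i j =>
  if (i : ℕ) + (j : ℕ) + 1 = n then 1 else 0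

/-- The `2n × 2n` matrix `J_{2n}` with block form `[[0, wₙ], [-wₙ, 0]]`. -/
noncomputable def JMat (n : ℕ) : Matrix (Fin (2 * n)) (Fin (2 * n)) ℂ :=
  Matrix.reindex (finSumFinEquiv.trans (finCongr (by omega)))
    (finSumFinEquiv.trans (finCongr (by omega)))
    (Matrix.fromBlocks 0 (wnMat n) (-(wnMat n)) 0)

/-- The matrix of the endomorphism `A = S ∘ ⋀ⁿ(J_{2n})` of `⋀ⁿ(ℂ^{2n})`. -/
noncomputable def Amat (n : ℕ) : Matrix (Idx n) (Idx n) ℂ :=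
  Smat n * wedgePow n (JMat n)

section Aux

variable {n : ℕ}

/-- `I` is "good" if its complement is the reversal of `I`. -/
def good (n : ℕ) (I : Idx n) : Prop := (I.1)ᶜ = I.1.image Fin.rev

instance : DecidablePred (good n) := fun _ => by unfold good; infer_instance

lemma complIdx_complIdx (I : Idx n) : complIdx n (complIdx n I) = I :=
  Subtype.ext (by simp [complIdx])

lemma JMat_apply (a b : Fin (2 * n)) :
    JMat n a b = if (a : ℕ) + (b : ℕ) + 1 = 2 * n then (if (a : ℕ) < n then 1 else -1)
      else 0 := by
  rw [JMat, Matrix.reindex_apply, Matrix.submatrix_apply]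
  rcases ha : (finSumFinEquiv.trans (finCongr (by omega : n + n = 2 * n))).symm a with i | i <;>
    rcases hb : (finSumFinEquiv.trans (finCongr (by omega : n + n = 2 * n))).symm b with j | j <;>
    have ha' := congrArg (fun x => (((finSumFinEquiv.trans
        (finCongr (by omega : n + n = 2 * n))) x : Fin (2 * n)) : ℕ)) ha <;>
    have hb' := congrArg (fun x => (((finSumFinEquiv.trans
        (finCongr (by omega : n + n = 2 * n))) x : Fin (2 * n)) : ℕ)) hb <;>
    simp only [Equiv.apply_symm_apply, Equiv.trans_apply, finSumFinEquiv_apply_left,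
      finSumFinEquiv_apply_right, finCongr_apply, Fin.coe_cast, Fin.coe_castAdd,
      Fin.coe_natAdd] at ha' hb' <;>
    have hi' := i.is_lt <;> have hj' := j.is_lt <;>
    simp only [Matrix.fromBlocks_apply₁₁, Matrix.fromBlocks_apply₁₂,
      Matrix.fromBlocks_apply₂₁, Matrix.fromBlocks_apply₂₂,
      Matrix.zero_apply, Matrix.neg_apply, wnMat] <;>
    split_ifs <;> first | rfl | omega | (exfalso; omega) | norm_num

lemma mem_compl_iff_rev_mem {I : Idx n} (hg : good n I) (x : Fin (2 * n)) :
    x ∈ (I.1)ᶜ ↔ Fin.rev x ∈ I.1 := by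
  rw [hg, Finset.mem_image]
  constructor
  · rintro ⟨y, hy, rfl⟩; rwa [Fin.rev_rev]
  · intro h; exact ⟨Fin.rev x, h, Fin.rev_rev x⟩

/-- The increasing enumeration of the complement of a good set. -/
lemma compl_orderEmb {I : Idx n} (hg : good n I) (a : Fin n) :
    ((I.1)ᶜ.orderEmbOfFin (complIdx n I).2 a)
      = Fin.rev (I.1.orderEmbOfFin I.2 (Fin.rev a)) := by
  have key : (fun a : Fin n => Fin.rev (I.1.orderEmbOfFin I.2 (Fin.rev a)))
      = (I.1)ᶜ.orderEmbOfFin (complIdx n I).2 := by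
    refine Finset.orderEmbOfFin_unique (complIdx n I).2 (fun x => ?_) (fun x y hxy => ?_)
    · show Fin.rev (I.1.orderEmbOfFin I.2 (Fin.rev x)) ∈ (I.1)ᶜ
      rw [mem_compl_iff_rev_mem hg, Fin.rev_rev]
      exact Finset.orderEmbOfFin_mem _ _ _
    · have h1 : Fin.rev y < Fin.rev x := Fin.rev_lt_rev.mpr hxy
      have h2 := (I.1.orderEmbOfFin I.2).strictMono h1
      exact Fin.rev_lt_rev.mpr h2
  exact (congrFun key a).symm

lemma wedge_not_good {I : Idx n} (hg : ¬ good n I) :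
    wedgePow n (JMat n) (complIdx n I) I = 0 := by
  obtain ⟨i, hiI, hrevI⟩ : ∃ i ∈ I.1, Fin.rev i ∈ I.1 := by
    by_contra hcon
    push_neg at hcon
    apply hg
    have hsub : I.1.image Fin.rev ⊆ (I.1)ᶜ := by
      intro x hx
      rw [Finset.mem_image] at hx
      obtain ⟨y, hy, rfl⟩ := hx
      simpa using hcon y hy
    have hcard : ((I.1)ᶜ).card = n := (complIdx n I).2
    refine (Finset.eq_of_subset_of_card_le hsub ?_).symm
    rw [Finset.card_image_of_injective _ Fin.rev_injective, I.2, hcard]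
  obtain ⟨b, hb⟩ : ∃ b : Fin n, (I.1.orderEmbOfFin I.2 b : Fin (2 * n)) = i := by
    have : i ∈ Set.range (I.1.orderEmbOfFin I.2) := by
      rw [Finset.range_orderEmbOfFin]; exact hiI
    exact this
  refine Matrix.det_eq_zero_of_column_eq_zero b (fun a => ?_)
  have hmem : ((I.1)ᶜ.orderEmbOfFin (complIdx n I).2 a : Fin (2 * n)) ∈ (I.1)ᶜ :=
    Finset.orderEmbOfFin_mem _ _ _
  rw [Matrix.of_apply]
  have e1 : ((complIdx n I).1.orderIsoOfFin (complIdx n I).2 a).1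
      = (I.1)ᶜ.orderEmbOfFin (complIdx n I).2 a := Finset.coe_orderIsoOfFin_apply _ _ _
  have e2 : (I.1.orderIsoOfFin I.2 b).1 = I.1.orderEmbOfFin I.2 b :=
    Finset.coe_orderIsoOfFin_apply _ _ _
  rw [e1, e2, hb, JMat_apply]
  rw [if_neg]
  intro hsum
  have hk : ((I.1)ᶜ.orderEmbOfFin (complIdx n I).2 a) = Fin.rev i := by
    have h1 := i.is_lt
    have h2 := ((I.1)ᶜ.orderEmbOfFin (complIdx n I).2 a).is_lt
    rw [Fin.ext_iff, Fin.val_rev]; omega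
  rw [hk] at hmem
  exact (Finset.mem_compl.mp hmem) hrevI

lemma prod_comp_orderEmbOfFin {s : Finset (Fin (2 * n))} (h : s.card = n)
    (f : Fin (2 * n) → ℂ) :
    (∏ a : Fin n, f (s.orderEmbOfFin h a)) = ∏ k ∈ s, f k := by
  refine Finset.prod_bij (fun a _ => s.orderEmbOfFin h a)
    (fun a _ => Finset.orderEmbOfFin_mem _ _ _)
    (fun a _ b _ hab => (s.orderEmbOfFin h).injective hab)
    (fun k hk => ?_) (fun a _ => rfl)
  have : k ∈ Set.range (s.orderEmbOfFin h) := by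
    rw [Finset.range_orderEmbOfFin]; exact hk
  obtain ⟨a, ha⟩ := this
  exact ⟨a, Finset.mem_univ a, ha⟩

lemma wedge_good {I : Idx n} (hg : good n I) :
    wedgePow n (JMat n) (complIdx n I) I =
      (∏ k ∈ (I.1)ᶜ, (if (k : ℕ) < n then (1 : ℂ) else -1)) *
        ((Equiv.Perm.sign (Fin.revPerm : Equiv.Perm (Fin n)) : ℤ) : ℂ) := by
  unfold wedgePow
  have hM : (Matrix.of fun a b : Fin n =>
      JMat n ((((complIdx n I).1.orderIsoOfFin (complIdx n I).2) a).1)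
        ((I.1.orderIsoOfFin I.2 b).1))
      = Matrix.diagonal (fun a : Fin n =>
          if (((I.1)ᶜ.orderEmbOfFin (complIdx n I).2 a : Fin (2 * n)) : ℕ) < n
          then (1 : ℂ) else -1) * (Fin.revPerm : Equiv.Perm (Fin n)).permMatrix ℂ := by
    ext a b
    rw [Matrix.diagonal_mul, Matrix.of_apply]
    have e1 : ((complIdx n I).1.orderIsoOfFin (complIdx n I).2 a).1
        = (I.1)ᶜ.orderEmbOfFin (complIdx n I).2 a := Finset.coe_orderIsoOfFin_apply _ _ _
    have e2 : (I.1.orderIsoOfFin I.2 b).1 = I.1.orderEmbOfFin I.2 b :=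
      Finset.coe_orderIsoOfFin_apply _ _ _
    rw [e1, e2, JMat_apply, compl_orderEmb hg]
    have hcond : ((Fin.rev (I.1.orderEmbOfFin I.2 (Fin.rev a)) : Fin (2 * n)) : ℕ)
        + ((I.1.orderEmbOfFin I.2 b : Fin (2 * n)) : ℕ) + 1 = 2 * n
        ↔ b = Fin.rev a := by
      have hx := (I.1.orderEmbOfFin I.2 (Fin.rev a)).is_lt
      have hy := (I.1.orderEmbOfFin I.2 b).is_lt
      rw [Fin.val_rev]
      constructor
      · intro h
        refine (I.1.orderEmbOfFin I.2).injective (Fin.ext ?_)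
        omega
      · intro h
        rw [h]
        omega
    have hperm : (Fin.revPerm : Equiv.Perm (Fin n)).permMatrix ℂ a b
        = if b = Fin.rev a then (1 : ℂ) else 0 := by
      simp [Equiv.Perm.permMatrix, PEquiv.toMatrix_apply, Equiv.toPEquiv_apply, eq_comm]
    rw [hperm]
    by_cases hb : b = Fin.rev a
    · rw [if_pos (hcond.mpr hb), if_pos hb, mul_one]
    · rw [if_neg (fun h => hb (hcond.mp h)), if_neg hb, mul_zero]
  rw [hM, Matrix.det_mul, Matrix.det_diagonal, Matrix.det_permutation]
  rw [prod_comp_orderEmbOfFin (s := (I.1 : Finset (Fin (2 * n)))ᶜ) (complIdx n I).2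
    (fun k => if (k : ℕ) < n then (1 : ℂ) else -1)]

lemma prod_sign_eq_pow (s : Finset (Fin (2 * n))) :
    (∏ k ∈ s, (if (k : ℕ) < n then (1 : ℂ) else -1))
      = (-1 : ℂ) ^ (s.filter (fun k => ¬ (k.val < n))).card := by
  rw [Finset.prod_ite, Finset.prod_const, Finset.prod_const, one_pow, one_mul]

lemma neg_one_pow_congr' {a b : ℕ} (h : a % 2 = b % 2) : (-1 : ℂ) ^ a = (-1 : ℂ) ^ b := by
  conv_lhs => rw [← Nat.div_add_mod a 2]
  conv_rhs => rw [← Nat.div_add_mod b 2]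
  rw [pow_add, pow_add, pow_mul, pow_mul, h]
  norm_num

lemma inv_parity {I : Idx n} (hg : good n I) :
    (((I.1 ×ˢ (I.1)ᶜ).filter fun p => p.2 < p.1).card) % 2
      = ((I.1.filter fun i => ¬ (i.val < n)).card) % 2 := by
  have h1 : ((I.1 ×ˢ (I.1)ᶜ).filter fun p => p.2 < p.1).card
      = ((I.1 ×ˢ I.1).filter fun p => 2 * n ≤ (p.1 : ℕ) + (p.2 : ℕ)).card := by
    refine Finset.card_bij' (fun p _ => (p.1, Fin.rev p.2)) (fun q _ => (q.1, Fin.rev q.2))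
      ?_ ?_ ?_ ?_
    · intro p hp
      simp only [Finset.mem_filter, Finset.mem_product] at hp ⊢
      obtain ⟨⟨h1, h2⟩, h3⟩ := hp
      refine ⟨⟨h1, (mem_compl_iff_rev_mem hg p.2).mp h2⟩, ?_⟩
      have ha := p.1.is_lt
      have hb := p.2.is_lt
      rw [Fin.val_rev]
      rw [Fin.lt_def] at h3
      omega
    · intro q hq
      simp only [Finset.mem_filter, Finset.mem_product] at hq ⊢
      obtain ⟨⟨h1, h2⟩, h3⟩ := hq
      refine ⟨⟨h1, ?_⟩, ?_⟩
      · rw [mem_compl_iff_rev_mem hg, Fin.rev_rev]; exact h2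
      · have ha := q.1.is_lt
        have hb := q.2.is_lt
        rw [Fin.lt_def, Fin.val_rev]
        omega
    · intro p _; simp [Fin.rev_rev]
    · intro q _; simp [Fin.rev_rev]
  rw [h1]
  set S := (I.1 ×ˢ I.1).filter fun p => 2 * n ≤ (p.1 : ℕ) + (p.2 : ℕ) with hS
  have hsplit1 : (S.filter fun p => p.1 < p.2).card
      + (S.filter fun p => ¬ p.1 < p.2).card = S.card :=
    Finset.card_filter_add_card_filter_not _
  have hsplit2 : ((S.filter fun p => ¬ p.1 < p.2).filter fun p => p.2 < p.1).card
      + ((S.filter fun p => ¬ p.1 < p.2).filter fun p => ¬ p.2 < p.1).card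
      = (S.filter fun p => ¬ p.1 < p.2).card :=
    Finset.card_filter_add_card_filter_not _
  have he1 : ((S.filter fun p => ¬ p.1 < p.2).filter fun p => p.2 < p.1)
      = S.filter fun p => p.2 < p.1 := by
    rw [Finset.filter_filter]
    refine Finset.filter_congr (fun p _ => ?_)
    constructor
    · tauto
    · intro h; exact ⟨fun h' => absurd h (lt_asymm h'), h⟩
  have he2 : ((S.filter fun p => ¬ p.1 < p.2).filter fun p => ¬ p.2 < p.1)
      = S.filter fun p => p.1 = p.2 := by
    rw [Finset.filter_filter]
    refine Finset.filter_congr (fun p _ => ?_)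
    rw [Fin.lt_def, Fin.lt_def, Fin.ext_iff]
    constructor
    · rintro ⟨h1, h2⟩; omega
    · intro h; omega
  have hlg : (S.filter fun p => p.1 < p.2).card = (S.filter fun p => p.2 < p.1).card := by
    refine Finset.card_bij' (fun p _ => (p.2, p.1)) (fun q _ => (q.2, q.1)) ?_ ?_ ?_ ?_
    · intro p hp
      simp only [hS, Finset.mem_filter, Finset.mem_product] at hp ⊢
      obtain ⟨⟨⟨m1, m2⟩, m3⟩, m4⟩ := hp
      exact ⟨⟨⟨m2, m1⟩, by omega⟩, m4⟩
    · intro q hq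
      simp only [hS, Finset.mem_filter, Finset.mem_product] at hq ⊢
      obtain ⟨⟨⟨m1, m2⟩, m3⟩, m4⟩ := hq
      exact ⟨⟨⟨m2, m1⟩, by omega⟩, m4⟩
    · intro p _; rfl
    · intro q _; rfl
  have hdiag : (S.filter fun p => p.1 = p.2).card
      = (I.1.filter fun i => ¬ (i.val < n)).card := by
    refine Finset.card_bij' (fun p _ => p.1) (fun i _ => (i, i)) ?_ ?_ ?_ ?_
    · intro p hp
      simp only [hS, Finset.mem_filter, Finset.mem_product] at hp ⊢
      obtain ⟨⟨⟨m1, m2⟩, m3⟩, m4⟩ := hp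
      rw [m4] at m3
      exact ⟨m1, by omega⟩
    · intro i hi
      simp only [Finset.mem_filter] at hi
      have h1 := hi.1
      have h2 := hi.2
      simp only [hS]
      refine Finset.mem_filter.mpr ⟨Finset.mem_filter.mpr
        ⟨Finset.mem_product.mpr ⟨h1, h1⟩, ?_⟩, rfl⟩
      show 2 * n ≤ (i : ℕ) + (i : ℕ)
      omega
    · intro p hp
      simp only [Finset.mem_filter] at hp
      exact Prod.ext rfl hp.2
    · intro i _; rfl
  rw [he1, he2] at hsplit2
  omega

lemma top_count_const (I : Idx n) :
    (I.1.filter fun i => ¬ (i.val < n)).card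
      + (((I.1)ᶜ).filter fun i => ¬ (i.val < n)).card
      = ((Finset.univ : Finset (Fin (2 * n))).filter fun i => ¬ (i.val < n)).card := by
  rw [← Finset.card_union_of_disjoint
    (Finset.disjoint_filter_filter disjoint_compl_right),
    ← Finset.filter_union, Finset.union_compl]

lemma Amat_diag (I : Idx n) :
    Amat n I I = if good n I then
      ((-1 : ℂ) ^ (((Finset.univ : Finset (Fin (2 * n))).filter
          fun i => ¬ (i.val < n)).card) *
        ((Equiv.Perm.sign (Fin.revPerm : Equiv.Perm (Fin n)) : ℤ) : ℂ)) else 0 := by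
  rw [Amat, Matrix.mul_apply]
  rw [Finset.sum_eq_single (complIdx n I)]
  rotate_left
  · intro K _ hK
    rw [Smat, if_neg, zero_mul]
    intro h
    exact hK (by rw [h, complIdx_complIdx])
  · intro h
    exact absurd (Finset.mem_univ _) h
  have hs : Smat n I (complIdx n I) = qCoeff n I (complIdx n I) := by
    rw [Smat, if_pos (complIdx_complIdx I).symm, complIdx_complIdx]
  have hq : qCoeff n I (complIdx n I)
      = (-1 : ℂ) ^ (((I.1 ×ˢ (I.1)ᶜ).filter fun p => p.2 < p.1).card) := by
    have hc : ((complIdx n I : Idx n) : Finset (Fin (2 * n))) = (I.1)ᶜ := rfl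
    rw [qCoeff, if_pos hc]
    rfl
  rw [hs, hq]
  by_cases hg : good n I
  · rw [if_pos hg, wedge_good hg, prod_sign_eq_pow, ← mul_assoc, ← pow_add]
    congr 1
    apply neg_one_pow_congr'
    have h1 := inv_parity hg
    have h2 := top_count_const I
    omega
  · rw [if_neg hg, wedge_not_good hg, mul_zero]

lemma good_nonempty (n : ℕ) :
    ((Finset.univ : Finset (Idx n)).filter (good n)).Nonempty := by
  have hle : n ≤ 2 * n := by omega
  have hmem : ∀ x : Fin (2 * n),
      (x ∈ Finset.univ.map ⟨Fin.castLE hle, Fin.castLE_injective hle⟩) ↔ x.val < n := by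
    intro x
    simp only [Finset.mem_map, Finset.mem_univ, true_and, Function.Embedding.coeFn_mk]
    constructor
    · rintro ⟨j, rfl⟩; exact j.is_lt
    · intro h; exact ⟨⟨x.val, h⟩, Fin.ext rfl⟩
  refine ⟨⟨Finset.univ.map ⟨Fin.castLE hle, Fin.castLE_injective hle⟩, by simp⟩, ?_⟩
  rw [Finset.mem_filter]
  refine ⟨Finset.mem_univ _, ?_⟩
  unfold good
  ext x
  rw [Finset.mem_compl, hmem, Finset.mem_image]
  have hx := x.is_lt
  constructor
  · intro h
    refine ⟨Fin.rev x, (hmem _).mpr ?_, Fin.rev_rev x⟩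
    rw [Fin.val_rev]; omega
  · rintro ⟨y, hy, rfl⟩
    rw [hmem] at hy
    rw [Fin.val_rev]; omega

lemma trace_Amat_ne_zero (n : ℕ) : Matrix.trace (Amat n) ≠ 0 := by
  have htr : Matrix.trace (Amat n)
      = (((Finset.univ : Finset (Idx n)).filter (good n)).card : ℂ) *
        ((-1 : ℂ) ^ (((Finset.univ : Finset (Fin (2 * n))).filter
            fun i => ¬ (i.val < n)).card) *
          ((Equiv.Perm.sign (Fin.revPerm : Equiv.Perm (Fin n)) : ℤ) : ℂ)) := by
    rw [Matrix.trace]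
    simp only [Matrix.diag]
    calc (∑ I : Idx n, Amat n I I)
        = ∑ I : Idx n, (if good n I then
            ((-1 : ℂ) ^ (((Finset.univ : Finset (Fin (2 * n))).filter
                fun i => ¬ (i.val < n)).card) *
              ((Equiv.Perm.sign (Fin.revPerm : Equiv.Perm (Fin n)) : ℤ) : ℂ)) else 0) :=
          Finset.sum_congr rfl (fun I _ => Amat_diag I)
      _ = _ := by
          rw [Finset.sum_ite, Finset.sum_const, Finset.sum_const_zero, add_zero, nsmul_eq_mul]
  rw [htr]
  refine mul_ne_zero ?_ (mul_ne_zero ?_ ?_)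
  · exact_mod_cast Nat.cast_ne_zero.mpr
      (Finset.card_ne_zero_of_mem (good_nonempty n).choose_spec)
  · exact pow_ne_zero _ (by norm_num)
  · exact_mod_cast Int.cast_ne_zero.mpr (Units.ne_zero _)

end Aux

/-- The endomorphisms `A` and `-A` of `⋀ⁿ(ℂ^{2n})` are not conjugate: there is no
invertible linear endomorphism `P` with `P ∘ A ∘ P⁻¹ = -A`. -/
theorem Amat_not_conjugate_neg (n : ℕ) (hn : 1 ≤ n) :
    ¬ ∃ P : Matrix (Idx n) (Idx n) ℂ, IsUnit P ∧ P * Amat n * P⁻¹ = -(Amat n) := by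
  rintro ⟨P, hP, hconj⟩
  have hdet : IsUnit P.det := (Matrix.isUnit_iff_isUnit_det P).mp hP
  have h0 : -Matrix.trace (Amat n) = Matrix.trace (Amat n) := by
    rw [← Matrix.trace_neg, ← hconj, Matrix.trace_mul_comm, ← Matrix.mul_assoc,
      Matrix.nonsing_inv_mul _ hdet, Matrix.one_mul]
  exact trace_Amat_ne_zero n (by linear_combination -h0 / 2)
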